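/- For every natural number p: the m-value of (ab)^p equals P(2p), and the m-value of a·(ab)^p equals P(2p+1), where P is the Pell sequence. -/

import Mathlib

def A : Matrix (Fin 2) (Fin 2) ℤ := !![1,1;1,2]
def B : Matrix (Fin 2) (Fin 2) ℤ := !![2,1;1,1]
/-- matrix of a word: `false` is the letter `a`, `true` is the letter `b` -/
def Mw (w : List Bool) : Matrix (Fin 2) (Fin 2) ℤ :=
  (w.map (fun x => if x then B else A)).prod
/-- the m-value: the top-right entry -/
def mval (w : List Bool) : ℤ := Mw w 0 1
def U : Matrix (Fin 2) (Fin 2) ℤ := !![0,-1;1,0]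
def J : Matrix (Fin 2) (Fin 2) ℤ := !![0,1;1,0]
/-- reversal with letters exchanged -/
def Ebar (w : List Bool) : List Bool := (w.map (fun x => !x)).reverse
def pell : ℕ → ℕ
  | 0 => 0
  | 1 => 1
  | n+2 => 2 * pell (n+1) + pell n

lemma pell_rec (n : ℕ) : pell (n+2) = 2 * pell (n+1) + pell n := rfl

lemma Mw_append (u v : List Bool) : Mw (u ++ v) = Mw u * Mw v := by
  simp [Mw, List.prod_append]

lemma Mw_ab : Mw [false, true] = !![3,2;4,3] := by
  simp [Mw, A, B, Matrix.mul_fin_two]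

lemma key (p : ℕ) : Mw ((List.replicate p [false, true]).flatten) =
    !![(pell (2*p+1) : ℤ) - pell (2*p), pell (2*p);
       2 * pell (2*p), (pell (2*p+1) : ℤ) - pell (2*p)] := by
  induction p with
  | zero => simp [Mw, pell, Matrix.one_fin_two]
  | succ n ih =>
      have h : (List.replicate (n+1) [false, true]).flatten =
          (List.replicate n [false, true]).flatten ++ [false, true] := by
        rw [List.replicate_succ']
        simp
      rw [h, Mw_append, ih, Mw_ab]
      have h1 : pell (2*(n+1)) = 2 * pell (2*n+1) + pell (2*n) := by
        have : 2*(n+1) = 2*n+2 := by ring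
        rw [this, pell_rec]
      have h2 : pell (2*(n+1)+1) = 2 * pell (2*(n+1)) + pell (2*n+1) := by
        have : 2*(n+1)+1 = (2*n+1)+2 := by ring
        have e2 : 2*(n+1) = (2*n+1)+1 := by ring
        rw [this, e2, pell_rec]
      rw [Matrix.mul_fin_two]
      congr 1 <;> · push_cast [h1, h2]; ring

theorem stmt16 (p : ℕ) :
    mval ((List.replicate p [false, true]).flatten) = (pell (2*p) : ℤ) ∧
    mval ([false] ++ (List.replicate p [false, true]).flatten) = (pell (2*p+1) : ℤ) := by
  constructor
  · simp [mval, key p]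
  · have : Mw [false] = A := by simp [Mw]
    rw [mval, Mw_append, this, key p, A, Matrix.mul_fin_two]
    simp
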